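/- arXiv:1311.1893 — 3 statements merged into one kernel-verified Lean document; each statement's English description precedes it below -/
import Mathlib

section
/- For every g ∈ L²(P0) with ∫ g dP0 = 0, the curve ℝ → M₁(Ω,𝒜), t ↦ P_{tg}, where P_{tg} := c(tg)^{−1}(1 + tg/2)² · P0 and c(tg) = ∫ (1 + tg/2)² dP0, is L²(P0)-differentiable with tangent g. -/
open MeasureTheory Filter Set

noncomputable section

namespace Semipar

variable {Ω : Type*} [MeasurableSpace Ω]

/-- `t ↦ P t` is an `L²(P0)`-differentiable curve on `(-ε, ε)` with tangent `g`:
`P 0 = P0`, the values on `(-ε, ε)` are probability measures, `g ∈ L²(P0)`,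
`‖(2/t)(√(dPₜ/dP0) − 1) − g‖_{L²(P0)} → 0` as `t → 0`, and
`t⁻² · (P0-singular part of Pₜ)(Ω) → 0` as `t → 0`. -/
def IsL2DiffCurve (P0 : Measure Ω) (ε : ℝ) (P : ℝ → Measure Ω) (g : Ω → ℝ) : Prop :=
  0 < ε ∧ P 0 = P0 ∧ (∀ t ∈ Ioo (-ε) ε, IsProbabilityMeasure (P t)) ∧
    MemLp g 2 P0 ∧
    Tendsto (fun t : ℝ =>
        eLpNorm (fun ω => (2 / t) * (Real.sqrt ((P t).rnDeriv P0 ω).toReal - 1) - g ω) 2 P0)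
      (nhdsWithin 0 {0}ᶜ) (nhds 0) ∧
    Tendsto (fun t : ℝ => ENNReal.ofReal (1 / t ^ 2) * (P t).singularPart P0 univ)
      (nhdsWithin 0 {0}ᶜ) (nhds 0)

/-- An `L²(P0)`-differentiable curve taking its values in the model `Ps`. -/
def IsL2DiffCurveIn (Ps : Set (Measure Ω)) (P0 : Measure Ω) (ε : ℝ) (P : ℝ → Measure Ω)
    (g : Ω → ℝ) : Prop :=
  IsL2DiffCurve P0 ε P g ∧ ∀ t ∈ Ioo (-ε) ε, P t ∈ Ps

/-- `K(P0, Ps)`: the set of tangents of all `L²(P0)`-differentiable curves in `Ps`. -/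
def tangentCone (P0 : Measure Ω) (Ps : Set (Measure Ω)) : Set (Ω → ℝ) :=
  {g | ∃ ε P, IsL2DiffCurveIn Ps P0 ε P g}

/-- `A` is dense in `B` with respect to the `L²(P0)`-norm. -/
def DenseInL2 (P0 : Measure Ω) (A B : Set (Ω → ℝ)) : Prop :=
  ∀ h ∈ B, ∀ δ : ℝ, 0 < δ →
    ∃ g ∈ A, eLpNorm (fun ω => h ω - g ω) 2 P0 < ENNReal.ofReal δ

/-- `T(P0, Ps)`: the tangent space, i.e. the `L²(P0)`-closure of `K(P0, Ps)`. -/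
def tangentSpace (P0 : Measure Ω) (Ps : Set (Measure Ω)) : Set (Ω → ℝ) :=
  {h | MemLp h 2 P0 ∧ ∀ δ : ℝ, 0 < δ →
    ∃ g ∈ tangentCone P0 Ps, eLpNorm (fun ω => h ω - g ω) 2 P0 < ENNReal.ofReal δ}

/-- `kd` is a gradient of the statistical functional `k : Ps → ℝ` at `P0`. -/
def IsGradient (Ps : Set (Measure Ω)) (k : Measure Ω → ℝ) (P0 : Measure Ω)
    (kd : Ω → ℝ) : Prop :=
  MemLp kd 2 P0 ∧ (∫ ω, kd ω ∂P0) = 0 ∧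
    ∀ ε P g, IsL2DiffCurveIn Ps P0 ε P g →
      Tendsto (fun t => (k (P t) - k P0) / t) (nhdsWithin 0 (Ioi 0))
        (nhds (∫ ω, kd ω * g ω ∂P0))

/-- `kt` is the canonical gradient of `k` at `P0`: a gradient lying in `T(P0, Ps)`. -/
def IsCanonicalGradient (Ps : Set (Measure Ω)) (k : Measure Ω → ℝ) (P0 : Measure Ω)
    (kt : Ω → ℝ) : Prop :=
  IsGradient Ps k P0 kt ∧ kt ∈ tangentSpace P0 Ps

/-- `N(kt, P0, Ps)`: the orthogonal complement of `kt` in the tangent space. -/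
def orthComplement (P0 : Measure Ω) (Ps : Set (Measure Ω)) (kt : Ω → ℝ) : Set (Ω → ℝ) :=
  {h ∈ tangentSpace P0 Ps | ∫ ω, h ω * kt ω ∂P0 = 0}

/-- The family `𝓕` of implicit alternatives and hypotheses: `Q n = P (tseq n)` for an
`L²(P0)`-differentiable curve `P` in `Ps`, where `tseq n ≥ 0` and `√n · tseq n`
converges to a positive limit. -/
def ImplicitFamily (Ps : Set (Measure Ω)) (P0 : Measure Ω) (Q : ℕ → Measure Ω) : Prop :=
  ∃ (tseq : ℕ → ℝ) (c : ℝ), (∀ n, 0 ≤ tseq n) ∧ 0 < c ∧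
    Tendsto (fun n : ℕ => Real.sqrt n * tseq n) atTop (nhds c) ∧
    ∃ ε P g, IsL2DiffCurveIn Ps P0 ε P g ∧ (∀ n, tseq n ∈ Ioo (-ε) ε) ∧
      ∀ n, P (tseq n) = Q n

/-- The standard normal cumulative distribution function `Φ`. -/
def stdGaussCDF (x : ℝ) : ℝ :=
  ∫ t in Iic x, (Real.sqrt (2 * Real.pi))⁻¹ * Real.exp (-t ^ 2 / 2)

/-- The `L²(P0)`-norm `‖h‖ = (∫ h² dP0)^{1/2}`. -/
def l2norm (P0 : Measure Ω) (h : Ω → ℝ) : ℝ := Real.sqrt (∫ ω, h ω ^ 2 ∂P0)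

/-- The one-sided test `φ₁ₙ`, rejecting iff `n^{-1/2} Σ kt(xᵢ) > c`. -/
def phi1 (kt : Ω → ℝ) (c : ℝ) (n : ℕ) (x : Fin n → Ω) : ℝ :=
  if c < (Real.sqrt n)⁻¹ * ∑ i, kt (x i) then 1 else 0

/-- The two-sided test `φ₂ₙ`, rejecting iff `|n^{-1/2} Σ kt(xᵢ)| > c`. -/
def phi2 (kt : Ω → ℝ) (c : ℝ) (n : ℕ) (x : Fin n → Ω) : ℝ :=
  if c < |(Real.sqrt n)⁻¹ * ∑ i, kt (x i)| then 1 else 0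

/-- The `n`-fold product measure `Pⁿ` on `Ωⁿ`. -/
def productMeasure (P : Measure Ω) (n : ℕ) : Measure (Fin n → Ω) :=
  Measure.pi fun _ => P

end Semipar

open scoped Topology ENNReal NNReal

set_option maxHeartbeats 1000000

/-- for `g ∈ L²(P0)` with `∫ g dP0 = 0`, the curve
`t ↦ P_{tg} = c(tg)⁻¹ (1 + t g/2)² · P0` (with `c(tg) = ∫ (1 + t g/2)² dP0`), defined for
all `t ∈ ℝ`, is `L²(P0)`-differentiable with tangent `g`. -/
theorem statement_11 {Ω : Type*} [MeasurableSpace Ω] (P0 : Measure Ω)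
    [IsProbabilityMeasure P0] (g : Ω → ℝ) (hg : MemLp g 2 P0)
    (hg0 : ∫ ω, g ω ∂P0 = 0) (ε : ℝ) (hε : 0 < ε) :
    Semipar.IsL2DiffCurve P0 ε
      (fun t => P0.withDensity fun ω =>
        ENNReal.ofReal ((∫ x, (1 + t * g x / 2) ^ 2 ∂P0)⁻¹ * (1 + t * g ω / 2) ^ 2)) g := by
  classical
  have hgm : AEMeasurable g P0 := hg.aestronglyMeasurable.aemeasurable
  have hgi : Integrable g P0 := hg.integrable one_le_two
  have hg2 : Integrable (fun ω => g ω ^ 2) P0 := hg.integrable_sq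
  set m : ℝ := ∫ ω, g ω ^ 2 ∂P0 with hm_def
  have hm : 0 ≤ m := integral_nonneg fun ω => sq_nonneg _
  have hsqint : ∀ t : ℝ, Integrable (fun x => (1 + t * g x / 2) ^ 2) P0 := by
    intro t
    have h1 : (fun x => (1 + t * g x / 2) ^ 2)
        = fun x => (1 : ℝ) + t * g x + t ^ 2 / 4 * g x ^ 2 := by funext x; ring
    rw [h1]
    exact ((integrable_const 1).add (hgi.const_mul t)).add (hg2.const_mul _)
  have hc : ∀ t : ℝ, (∫ x, (1 + t * g x / 2) ^ 2 ∂P0) = 1 + t ^ 2 * m / 4 := by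
    intro t
    have h1 : (fun x => (1 + t * g x / 2) ^ 2)
        = fun x => (1 : ℝ) + t * g x + t ^ 2 / 4 * g x ^ 2 := by funext x; ring
    have ha0 : Integrable (fun x => (1 : ℝ) + t * g x) P0 := by
      exact (integrable_const 1).add (hgi.const_mul t)
    rw [h1, integral_add ha0 (hg2.const_mul _),
      integral_add (integrable_const 1) (hgi.const_mul t),
      integral_const_mul, integral_const_mul, hg0, integral_const]
    simp [← hm_def]
    ring
  have hc1 : ∀ t : ℝ, (1 : ℝ) ≤ ∫ x, (1 + t * g x / 2) ^ 2 ∂P0 := by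
    intro t; rw [hc]; nlinarith [sq_nonneg t]
  have hcpos : ∀ t : ℝ, (0 : ℝ) < ∫ x, (1 + t * g x / 2) ^ 2 ∂P0 := fun t =>
    lt_of_lt_of_le one_pos (hc1 t)
  -- measurability of the densities
  have hfmeas : ∀ t : ℝ, AEMeasurable (fun ω =>
      ENNReal.ofReal ((∫ x, (1 + t * g x / 2) ^ 2 ∂P0)⁻¹ * (1 + t * g ω / 2) ^ 2)) P0 := by
    intro t
    refine ENNReal.measurable_ofReal.comp_aemeasurable ?_
    exact ((aemeasurable_const.add ((hgm.const_mul t).div_const 2)).pow_const 2).const_mul _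
  -- square-root function bounds
  have hsqle : ∀ x : ℝ, 0 ≤ x → Real.sqrt (1 + x) ≤ 1 + x / 2 := by
    intro x hx
    rw [show (1 : ℝ) + x / 2 = Real.sqrt ((1 + x / 2) ^ 2) from
      (Real.sqrt_sq (by linarith)).symm]
    exact Real.sqrt_le_sqrt (by nlinarith)
  have hs_le : ∀ t : ℝ, Real.sqrt ((∫ x, (1 + t * g x / 2) ^ 2 ∂P0)⁻¹) ≤ 1 := by
    intro t
    have : (∫ x, (1 + t * g x / 2) ^ 2 ∂P0)⁻¹ ≤ 1 := inv_le_one_of_one_le₀ (hc1 t)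
    calc Real.sqrt ((∫ x, (1 + t * g x / 2) ^ 2 ∂P0)⁻¹) ≤ Real.sqrt 1 :=
          Real.sqrt_le_sqrt this
      _ = 1 := Real.sqrt_one
  have hs_ge : ∀ t : ℝ, 1 - t ^ 2 * m / 8 ≤ Real.sqrt ((∫ x, (1 + t * g x / 2) ^ 2 ∂P0)⁻¹) := by
    intro t
    have hx : (0 : ℝ) ≤ t ^ 2 * m / 4 := by nlinarith [sq_nonneg t]
    rw [hc, Real.sqrt_inv]
    rcases le_or_gt (1 - t ^ 2 * m / 8) 0 with h | h
    · exact h.trans (inv_nonneg.2 (Real.sqrt_nonneg _))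
    · have h1 : 0 < Real.sqrt (1 + t ^ 2 * m / 4) := Real.sqrt_pos.2 (by linarith)
      rw [inv_eq_one_div, le_div_iff₀ h1]
      calc (1 - t ^ 2 * m / 8) * Real.sqrt (1 + t ^ 2 * m / 4)
          ≤ (1 - t ^ 2 * m / 8) * (1 + (t ^ 2 * m / 4) / 2) :=
            mul_le_mul_of_nonneg_left (hsqle _ hx) h.le
        _ ≤ 1 := by nlinarith
  have hs_nonneg : ∀ t : ℝ,
      0 ≤ Real.sqrt ((∫ x, (1 + t * g x / 2) ^ 2 ∂P0)⁻¹) := fun t => Real.sqrt_nonneg _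
  -- the comparison function H
  set H : ℝ → Ω → ℝ := fun t ω =>
    2 / t * (Real.sqrt ((∫ x, (1 + t * g x / 2) ^ 2 ∂P0)⁻¹) * |1 + t * g ω / 2| - 1) - g ω
    with hH
  have hae : ∀ t : ℝ,
      (fun ω => 2 / t * (Real.sqrt ((Measure.rnDeriv (P0.withDensity fun ω' =>
          ENNReal.ofReal ((∫ x, (1 + t * g x / 2) ^ 2 ∂P0)⁻¹
            * (1 + t * g ω' / 2) ^ 2)) P0 ω).toReal) - 1) - g ω) =ᵐ[P0] H t := by
    intro t
    filter_upwards [Measure.rnDeriv_withDensity₀ P0 (hfmeas t)] with ω hω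
    simp only [hH]
    rw [hω, ENNReal.toReal_ofReal (mul_nonneg (inv_nonneg.2 (hcpos t).le) (sq_nonneg _)),
      Real.sqrt_mul (inv_nonneg.2 (hcpos t).le), Real.sqrt_sq_eq_abs]
  -- H is a.e.-measurable
  have hHmeas : ∀ t : ℝ, AEMeasurable (H t) P0 := by
    intro t
    simp only [hH]
    refine AEMeasurable.sub ?_ hgm
    refine AEMeasurable.const_mul ?_ _
    refine AEMeasurable.sub ?_ aemeasurable_const
    refine AEMeasurable.const_mul ?_ _
    exact continuous_abs.measurable.comp_aemeasurable
      (aemeasurable_const.add ((hgm.const_mul t).div_const 2))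
  -- the dominating function
  set B : Ω → ℝ := fun ω => m / 4 * (1 + |g ω| / 2) + 2 * |g ω| with hB
  have habs : MemLp (fun ω => |g ω|) 2 P0 := by
    simpa [Real.norm_eq_abs] using hg.norm
  have hBmem : MemLp B 2 P0 := by
    have h1 : B = fun ω => (m / 4 + (m / 8 + 2) * |g ω|) := by
      funext ω; simp only [hB]; ring
    rw [h1]
    exact (memLp_const (μ := P0) (p := 2) (m / 4)).add (habs.const_mul (m / 8 + 2))
  have hBnn : ∀ ω, 0 ≤ B ω := by
    intro ω
    simp only [hB]
    nlinarith [abs_nonneg (g ω), hm]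
  -- uniform bound
  have hbd : ∀ t : ℝ, t ≠ 0 → |t| ≤ 1 → ∀ ω, |H t ω| ≤ B ω := by
    intro t ht ht1 ω
    have htpos : 0 < |t| := abs_pos.2 ht
    set s : ℝ := Real.sqrt ((∫ x, (1 + t * g x / 2) ^ 2 ∂P0)⁻¹) with hs
    set X : ℝ := |1 + t * g ω / 2| with hX
    have hXnn : 0 ≤ X := abs_nonneg _
    have hXle : X ≤ 1 + |g ω| / 2 := by
      rw [hX]
      calc |(1 : ℝ) + t * g ω / 2| ≤ |(1 : ℝ)| + |t * g ω / 2| := abs_add_le _ _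
        _ ≤ 1 + |g ω| / 2 := by
            rw [abs_one]
            have h2 : |t * g ω / 2| = |t| * |g ω| / 2 := by
              rw [abs_div, abs_mul]; norm_num
            rw [h2]
            nlinarith [abs_nonneg (g ω)]
    have hX1 : |X - 1| ≤ |t| * |g ω| / 2 := by
      rw [hX]
      have h := abs_abs_sub_abs_le_abs_sub (1 + t * g ω / 2) 1
      rw [abs_one] at h
      calc |(|1 + t * g ω / 2| - 1)| ≤ |1 + t * g ω / 2 - 1| := h
        _ = |t| * |g ω| / 2 := by
            rw [show (1 : ℝ) + t * g ω / 2 - 1 = t * g ω / 2 by ring, abs_div, abs_mul]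
            norm_num
    have he2 : |s - 1| ≤ t ^ 2 * m / 8 := by
      rw [abs_sub_comm, abs_of_nonneg (by linarith [hs_le t])]
      linarith [hs_ge t]
    have hid : H t ω = 2 / t * (s - 1) * X + (2 / t * (X - 1) - g ω) := by
      simp only [hH, ← hs, ← hX]
      field_simp
      ring
    rw [hid]
    have e1 : |2 / t| = 2 / |t| := by rw [abs_div]; norm_num
    have h1 : |2 / t * (s - 1) * X| ≤ m / 4 * (1 + |g ω| / 2) := by
      rw [abs_mul, abs_mul, abs_of_nonneg hXnn]
      have e3 : 2 / |t| * (t ^ 2 * m / 8) = |t| * m / 4 := by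
        field_simp
        rw [← sq_abs t]
        ring
      calc |2 / t| * |s - 1| * X
          ≤ 2 / |t| * (t ^ 2 * m / 8) * (1 + |g ω| / 2) := by
            rw [e1]
            refine mul_le_mul ?_ hXle hXnn (by positivity)
            exact mul_le_mul_of_nonneg_left he2 (by positivity)
        _ = |t| * m / 4 * (1 + |g ω| / 2) := by rw [e3]
        _ ≤ m / 4 * (1 + |g ω| / 2) := by
            refine mul_le_mul_of_nonneg_right ?_ (by positivity)
            nlinarith
    have h2 : |2 / t * (X - 1) - g ω| ≤ 2 * |g ω| := by
      calc |2 / t * (X - 1) - g ω|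
          ≤ |2 / t * (X - 1)| + |g ω| := abs_sub _ _
        _ ≤ 2 / |t| * (|t| * |g ω| / 2) + |g ω| := by
            rw [abs_mul, e1]
            gcongr
        _ = 2 * |g ω| := by field_simp; ring
    refine le_trans (abs_add_le _ _) ?_
    simp only [hB]
    linarith
  -- small-t pointwise bound
  have hkey2 : ∀ (t : ℝ) (ω : Ω), t ≠ 0 → |t| * |g ω| < 1 →
      |H t ω| ≤ |t| * (m / 4) + t ^ 2 * (m / 8 * |g ω|) := by
    intro t ω ht hsm
    have htpos : 0 < |t| := abs_pos.2 ht
    set s : ℝ := Real.sqrt ((∫ x, (1 + t * g x / 2) ^ 2 ∂P0)⁻¹) with hs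
    have habs2 : |t * g ω / 2| = |t| * |g ω| / 2 := by
      rw [abs_div, abs_mul]; norm_num
    have hXpos : 0 < 1 + t * g ω / 2 := by
      have h1 := neg_abs_le (t * g ω / 2)
      rw [habs2] at h1
      nlinarith
    have he2 : |s - 1| ≤ t ^ 2 * m / 8 := by
      rw [abs_sub_comm, abs_of_nonneg (by linarith [hs_le t])]
      linarith [hs_ge t]
    have hid : H t ω = 2 / t * (s - 1) + (s - 1) * g ω := by
      simp only [hH, ← hs, abs_of_pos hXpos]
      field_simp
      ring
    rw [hid]
    have e1 : |2 / t| = 2 / |t| := by rw [abs_div]; norm_num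
    have e3 : 2 / |t| * (t ^ 2 * m / 8) = |t| * (m / 4) := by
      field_simp
      rw [← sq_abs t]
      ring
    calc |2 / t * (s - 1) + (s - 1) * g ω| ≤ |2 / t * (s - 1)| + |(s - 1) * g ω| :=
          abs_add_le _ _
      _ ≤ 2 / |t| * (t ^ 2 * m / 8) + t ^ 2 * m / 8 * |g ω| := by
          rw [abs_mul, abs_mul, e1]
          refine add_le_add ?_ (mul_le_mul_of_nonneg_right he2 (abs_nonneg _))
          exact mul_le_mul_of_nonneg_left he2 (by positivity)
      _ = |t| * (m / 4) + t ^ 2 * (m / 8 * |g ω|) := by rw [e3]; ring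
  -- pointwise convergence along sequences
  have hptwise : ∀ (v : ℕ → ℝ), (∀ n, v n ≠ 0) → Tendsto v atTop (𝓝 0) →
      ∀ ω, Tendsto (fun n => H (v n) ω) atTop (𝓝 0) := by
    intro v hvne hv0 ω
    have hb0 : Tendsto (fun n => |v n| * (m / 4) + (v n) ^ 2 * (m / 8 * |g ω|)) atTop (𝓝 0) := by
      have h1 : Tendsto (fun n => |v n|) atTop (𝓝 0) := by
        simpa using hv0.abs
      have h2 : Tendsto (fun n => (v n) ^ 2) atTop (𝓝 0) := by
        have := hv0.mul hv0
        simpa [pow_two] using this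
      simpa using (h1.mul_const (m / 4)).add (h2.mul_const (m / 8 * |g ω|))
    have hsmall : ∀ᶠ n in atTop, |v n| * |g ω| < 1 := by
      have hd := (Metric.tendsto_nhds.mp hv0) (1 / (|g ω| + 1)) (by positivity)
      filter_upwards [hd] with n hn
      rw [Real.dist_eq, sub_zero] at hn
      have hn' : |v n| * (|g ω| + 1) < 1 := by
        rw [← lt_div_iff₀ (by positivity : (0:ℝ) < |g ω| + 1)]
        simpa using hn
      nlinarith [abs_nonneg (v n), abs_nonneg (g ω)]
    refine squeeze_zero_norm' ?_ hb0
    filter_upwards [hsmall] with n hn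
    rw [Real.norm_eq_abs]
    exact hkey2 (v n) ω (hvne n) hn
  -- convergence of L² norms along nice sequences
  have key : ∀ v : ℕ → ℝ, (∀ n, v n ≠ 0) → (∀ n, |v n| ≤ 1) → Tendsto v atTop (𝓝 0) →
      Tendsto (fun n => eLpNorm (H (v n)) 2 P0) atTop (𝓝 0) := by
    intro v hvne hvle hv0
    have hI : Tendsto (fun n => ∫⁻ ω, (‖H (v n) ω‖₊ : ℝ≥0∞) ^ (2 : ℝ) ∂P0) atTop (𝓝 0) := by
      have hfin : (∫⁻ ω, (‖B ω‖₊ : ℝ≥0∞) ^ (2 : ℝ) ∂P0) ≠ ⊤ := by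
        have := lintegral_rpow_enorm_lt_top_of_eLpNorm_lt_top
          (p := 2) (f := B) (by norm_num) (by norm_num) hBmem.2
        exact (by simpa using this.ne : ∫⁻ a, ‖B a‖ₑ ^ (2:ℝ) ∂P0 ≠ ⊤)
      have h := tendsto_lintegral_of_dominated_convergence'
        (μ := P0) (F := fun n ω => (‖H (v n) ω‖₊ : ℝ≥0∞) ^ (2 : ℝ)) (f := fun _ => 0)
        (fun ω => (‖B ω‖₊ : ℝ≥0∞) ^ (2 : ℝ))
        (fun n => ENNReal.continuous_rpow_const.measurable.comp_aemeasurable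
          (hHmeas (v n)).aestronglyMeasurable.enorm)
        (fun n => by
          refine Filter.Eventually.of_forall fun ω => ?_
          refine ENNReal.rpow_le_rpow ?_ (by norm_num)
          rw [ENNReal.coe_le_coe]
          have h1 : ‖H (v n) ω‖ ≤ ‖B ω‖ := by
            rw [Real.norm_eq_abs, Real.norm_eq_abs, abs_of_nonneg (hBnn ω)]
            exact hbd (v n) (hvne n) (hvle n) ω
          exact_mod_cast h1
        ) hfin ?_
      · simpa using h
      · refine Filter.Eventually.of_forall fun ω => ?_
        have h0 := hptwise v hvne hv0 ω
        have h1 : Tendsto (fun n => (‖H (v n) ω‖₊ : ℝ≥0∞)) atTop (𝓝 0) := by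
          have := h0.nnnorm
          rw [show (𝓝 (0:ℝ≥0∞)) = 𝓝 ((‖(0:ℝ)‖₊ : ℝ≥0∞)) by simp]
          exact ENNReal.tendsto_coe.2 this
        have := h1.ennrpow_const 2
        simpa [ENNReal.zero_rpow_of_pos] using this
    have h2 := hI.ennrpow_const (1 / 2)
    have h3 : ((0 : ℝ≥0∞)) ^ ((1 : ℝ) / 2) = 0 := by
      rw [ENNReal.zero_rpow_of_pos]; norm_num
    rw [h3] at h2
    refine h2.congr fun n => ?_
    rw [eLpNorm_eq_lintegral_rpow_enorm_toReal (by norm_num) (by norm_num)]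
    norm_num
    rfl
  refine ⟨hε, ?_, ?_, hg, ?_, ?_⟩
  · -- P 0 = P0
    have h0 : (fun ω : Ω => ENNReal.ofReal
        ((∫ x, (1 + (0:ℝ) * g x / 2) ^ 2 ∂P0)⁻¹ * (1 + (0:ℝ) * g ω / 2) ^ 2))
        = fun _ => (1 : ℝ≥0∞) := by
      funext ω
      rw [hc]
      norm_num
    show P0.withDensity _ = P0
    rw [h0]
    exact withDensity_one
  · -- probability measures
    intro t _
    constructor
    show P0.withDensity _ Set.univ = 1
    rw [withDensity_apply _ MeasurableSet.univ, Measure.restrict_univ]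
    have hnn : 0 ≤ᵐ[P0] fun ω =>
        (∫ x, (1 + t * g x / 2) ^ 2 ∂P0)⁻¹ * (1 + t * g ω / 2) ^ 2 :=
      Filter.Eventually.of_forall fun ω =>
        mul_nonneg (inv_nonneg.2 (hcpos t).le) (sq_nonneg _)
    rw [← ofReal_integral_eq_lintegral_ofReal ((hsqint t).const_mul _) hnn]
    rw [integral_const_mul, inv_mul_cancel₀ (hcpos t).ne']
    simp
  · -- main L² convergence
    have hmainH : Tendsto (fun t => eLpNorm (H t) 2 P0) (nhdsWithin 0 {0}ᶜ) (𝓝 0) := by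
      rw [tendsto_iff_seq_tendsto]
      intro u hu
      have hu0 : Tendsto u atTop (𝓝 0) := hu.mono_right nhdsWithin_le_nhds
      have hne : ∀ᶠ n in atTop, u n ≠ 0 := by
        have h1 : {(0:ℝ)}ᶜ ∈ nhdsWithin (0:ℝ) {0}ᶜ := self_mem_nhdsWithin
        have h2 := hu h1
        rw [Filter.mem_map] at h2
        filter_upwards [h2] with n hn
        simpa using hn
      have hle : ∀ᶠ n in atTop, |u n| ≤ 1 := by
        have hd := (Metric.tendsto_nhds.mp hu0) 1 one_pos
        filter_upwards [hd] with n hn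
        rw [Real.dist_eq, sub_zero] at hn
        exact hn.le
      obtain ⟨N, hN⟩ := Filter.eventually_atTop.mp (hne.and hle)
      rw [← tendsto_add_atTop_iff_nat N]
      exact key (fun n => u (n + N)) (fun n => (hN _ (Nat.le_add_left N n)).1)
        (fun n => (hN _ (Nat.le_add_left N n)).2)
        (hu0.comp (tendsto_add_atTop_nat N))
    exact hmainH.congr fun t => (eLpNorm_congr_ae (hae t)).symm
  · -- singular part
    have hsp : ∀ t : ℝ, ENNReal.ofReal (1 / t ^ 2)
        * ((P0.withDensity fun ω => ENNReal.ofReal ((∫ x, (1 + t * g x / 2) ^ 2 ∂P0)⁻¹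
            * (1 + t * g ω / 2) ^ 2)).singularPart P0) Set.univ = 0 := by
      intro t
      rw [Measure.singularPart_eq_zero_of_ac (withDensity_absolutelyContinuous _ _)]
      simp
    exact Tendsto.congr (fun t => (hsp t).symm) tendsto_const_nhds
end
end

section
/- For every g ∈ L²(P0), lim_{t→0} ‖ (2/t)(|1 + (t/2)g| − 1) − g ‖_{L²(P0)} = 0. -/
open MeasureTheory Filter Set

noncomputable section

/-- for every `g ∈ L²(P0)`,
`lim_{t→0} ‖(2/t)(|1 + (t/2) g| − 1) − g‖_{L²(P0)} = 0`. -/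
theorem statement_12 {Ω : Type*} [MeasurableSpace Ω] (P0 : Measure Ω)
    [IsProbabilityMeasure P0] (g : Ω → ℝ) (hg : MemLp g 2 P0) :
    Tendsto (fun t : ℝ =>
        eLpNorm (fun ω => (2 / t) * (|1 + (t / 2) * g ω| - 1) - g ω) 2 P0)
      (nhdsWithin 0 {0}ᶜ) (nhds 0) := by
  obtain ⟨hgm, hg2⟩ := hg
  obtain ⟨g', hmeas, hae⟩ := hgm.aemeasurable
  have hkey : ∀ t : ℝ, eLpNorm (fun ω => (2 / t) * (|1 + (t / 2) * g ω| - 1) - g ω) 2 P0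
      = eLpNorm (fun ω => (2 / t) * (|1 + (t / 2) * g' ω| - 1) - g' ω) 2 P0 := by
    intro t
    apply eLpNorm_congr_ae
    filter_upwards [hae] with ω h
    rw [h]
  have hg2' : ∫⁻ ω, (‖g' ω‖₊ : ENNReal) ^ (2 : ℝ) ∂P0 < ⊤ := by
    have h1 : eLpNorm g' 2 P0 < ⊤ := by
      rwa [eLpNorm_congr_ae hae] at hg2
    have := lintegral_rpow_enorm_lt_top_of_eLpNorm_lt_top two_ne_zero ENNReal.ofNat_ne_top h1
    simpa [enorm_eq_nnnorm] using this
  simp_rw [hkey]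
  set F : ℝ → Ω → ℝ := fun t ω => (2 / t) * (|1 + (t / 2) * g' ω| - 1) - g' ω with hF
  have hA : Tendsto (fun t => ∫⁻ ω, (‖F t ω‖₊ : ENNReal) ^ (2 : ℝ) ∂P0)
      (nhdsWithin 0 {0}ᶜ) (nhds 0) := by
    have h0 : (0 : ENNReal) = ∫⁻ _ : Ω, (0 : ENNReal) ∂P0 := by simp
    rw [h0]
    apply tendsto_lintegral_filter_of_dominated_convergence
      (fun ω => ((2 : ENNReal) * ‖g' ω‖₊) ^ (2 : ℝ))
    · filter_upwards with t
      have : Measurable (F t) := by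
        apply Measurable.sub _ hmeas
        exact (measurable_const.mul ((measurable_const.add (measurable_const.mul hmeas)).abs.sub
          measurable_const))
      exact this.enorm.pow_const _
    · filter_upwards [eventually_mem_nhdsWithin] with t (ht : t ∈ ({0}ᶜ : Set ℝ))
      have ht0 : t ≠ 0 := ht
      filter_upwards with ω
      have habs : |F t ω| ≤ 2 * |g' ω| := by
        have h1 : abs (|1 + (t / 2) * g' ω| - 1) ≤ |(t / 2) * g' ω| := by
          have := abs_abs_sub_abs_le_abs_sub (1 + (t / 2) * g' ω) 1
          simpa using this
        calc |F t ω| ≤ |(2 / t) * (|1 + (t / 2) * g' ω| - 1)| + |g' ω| := abs_sub _ _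
          _ ≤ |2 / t| * |(t / 2) * g' ω| + |g' ω| := by
              rw [abs_mul]
              gcongr
          _ = 2 * |g' ω| := by
              rw [abs_mul, abs_div, abs_div]
              rw [show |(2:ℝ)| = 2 by norm_num]
              field_simp
              ring
      have h2 : (‖F t ω‖₊ : ENNReal) ≤ (2 : ENNReal) * ‖g' ω‖₊ := by
        have : (‖F t ω‖₊ : ENNReal) ≤ (‖2 * g' ω‖₊ : ENNReal) := by
          rw [← enorm_eq_nnnorm, ← enorm_eq_nnnorm, Real.enorm_eq_ofReal_abs, Real.enorm_eq_ofReal_abs]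
          exact ENNReal.ofReal_le_ofReal (by rwa [abs_mul, show |(2:ℝ)| = 2 by norm_num])
        simpa [nnnorm_mul] using this
      exact ENNReal.rpow_le_rpow h2 (by norm_num)
    · have hb : ∀ ω, ((2 : ENNReal) * ‖g' ω‖₊) ^ (2:ℝ)
          = (2 : ENNReal) ^ (2:ℝ) * (‖g' ω‖₊ : ENNReal) ^ (2 : ℝ) := fun ω =>
        ENNReal.mul_rpow_of_nonneg _ _ (by norm_num)
      simp_rw [hb]
      rw [lintegral_const_mul (f := fun a => (‖g' a‖₊ : ENNReal) ^ (2:ℝ)) _ (hmeas.enorm.pow_const _)]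
      refine (ENNReal.mul_lt_top ?_ hg2').ne
      rw [show ((2:ℝ)) = ((2:ℕ):ℝ) by norm_num, ENNReal.rpow_natCast]
      norm_num
    · filter_upwards with ω
      have hδ : (0:ℝ) < 2 / (|g' ω| + 1) := by positivity
      have hev : ∀ᶠ t in nhdsWithin (0:ℝ) {0}ᶜ,
          (‖F t ω‖₊ : ENNReal) ^ (2 : ℝ) = 0 := by
        have h1 : ∀ᶠ t in nhdsWithin (0:ℝ) {0}ᶜ, |t| < 2 / (|g' ω| + 1) := by
          have : ∀ᶠ t in nhds (0:ℝ), |t| < 2 / (|g' ω| + 1) := by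
            have := eventually_abs_sub_lt (0:ℝ) hδ
            simpa using this
          exact this.filter_mono nhdsWithin_le_nhds
        filter_upwards [h1, eventually_mem_nhdsWithin] with t h1 (ht : t ∈ ({0}ᶜ : Set ℝ))
        have ht0 : t ≠ 0 := ht
        have hpos : 0 < 1 + (t / 2) * g' ω := by
          have h2 : |(t / 2) * g' ω| < 1 := by
            rw [abs_mul, abs_div, show |(2:ℝ)| = 2 by norm_num]
            rw [lt_div_iff₀ (by positivity : (0:ℝ) < |g' ω| + 1)] at h1
            nlinarith [abs_nonneg t, abs_nonneg (g' ω)]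
          nlinarith [neg_abs_le ((t / 2) * g' ω)]
        have hFz : F t ω = 0 := by
          simp only [hF]
          rw [abs_of_pos hpos]
          field_simp
          ring
        rw [hFz]
        simp [ENNReal.zero_rpow_of_pos]
      refine Tendsto.congr' ?_ tendsto_const_nhds
      filter_upwards [hev] with t h using h.symm
  have heq : ∀ t : ℝ, eLpNorm (F t) 2 P0
      = (∫⁻ ω, (‖F t ω‖₊ : ENNReal) ^ (2 : ℝ) ∂P0) ^ (1/2 : ℝ) := by
    intro t
    rw [eLpNorm_eq_lintegral_rpow_enorm_toReal two_ne_zero ENNReal.ofNat_ne_top]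
    norm_num
    rfl
  have hfinal : Tendsto (fun t => (∫⁻ ω, (‖F t ω‖₊ : ENNReal) ^ (2 : ℝ) ∂P0) ^ (1/2 : ℝ))
      (nhdsWithin 0 {0}ᶜ) (nhds 0) := by
    have hc := (ENNReal.continuous_rpow_const (y := (1/2:ℝ))).tendsto 0
    have h := hc.comp hA
    simpa [Function.comp_def] using h
  exact hfinal.congr fun t => (heq t).symm
end
end

section
/- Let K be a linear subspace of a real Hilbert space H, let T be the closure of K, let k̃ ∈ T, and let N := {h ∈ T : ⟨h, k̃⟩ = 0}. Then K ∩ N is dense in N. -/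
open scoped RealInnerProductSpace

/-- let `K` be a linear subspace of a real Hilbert space `H`, `T` the
closure of `K`, `k̃ ∈ T`, and `N = {h ∈ T : ⟪h, k̃⟫ = 0}`. Then `K ∩ N` is dense in `N`,
i.e. `N` is contained in the closure of `K ∩ N`. -/
theorem statement_16 {H : Type*} [NormedAddCommGroup H] [InnerProductSpace ℝ H]
    [CompleteSpace H] (K : Submodule ℝ H) (kt : H) (hkt : kt ∈ closure (K : Set H)) :
    {h : H | h ∈ closure (K : Set H) ∧ ⟪h, kt⟫ = 0} ⊆
      closure ((K : Set H) ∩ {h : H | h ∈ closure (K : Set H) ∧ ⟪h, kt⟫ = 0}) := by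
  intro h hh
  obtain ⟨hT, h0⟩ := hh
  by_cases hkt0 : kt = 0
  · subst hkt0
    have : (K : Set H) ∩ {h : H | h ∈ closure (K : Set H) ∧ ⟪h, (0 : H)⟫ = 0}
        = (K : Set H) := by
      ext x
      simp only [Set.mem_inter_iff, Set.mem_setOf_eq, inner_zero_right, and_true]
      exact ⟨fun hx => hx.1, fun hx => ⟨hx, subset_closure hx⟩⟩
    rw [this]
    exact hT
  · -- pick k ∈ K with ⟪k, kt⟫ ≠ 0
    have hnorm : (0 : ℝ) < ‖kt‖ := norm_pos_iff.mpr hkt0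
    obtain ⟨k, hkK, hkd⟩ := Metric.mem_closure_iff.mp hkt ‖kt‖ hnorm
    have hc : ⟪k, kt⟫ ≠ 0 := by
      intro hc0
      have h1 : |⟪kt - k, kt⟫| ≤ ‖kt - k‖ * ‖kt‖ := abs_real_inner_le_norm _ _
      have h2 : ⟪kt - k, kt⟫ = ‖kt‖ ^ 2 := by
        rw [inner_sub_left, hc0, real_inner_self_eq_norm_sq]
        ring
      rw [h2] at h1
      have h3 : ‖kt - k‖ < ‖kt‖ := by rwa [dist_eq_norm] at hkd
      nlinarith [abs_le.mp h1]
    set c : ℝ := ⟪k, kt⟫ with hcdef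
    set φ : H → H := fun x => x - (⟪x, kt⟫ / c) • k with hφdef
    have hφcont : Continuous φ := by
      apply Continuous.sub continuous_id
      exact ((continuous_id.inner continuous_const).div_const c).smul continuous_const
    have hφh : φ h = h := by
      simp [hφdef, h0]
    have himg : φ '' (K : Set H) ⊆
        (K : Set H) ∩ {h : H | h ∈ closure (K : Set H) ∧ ⟪h, kt⟫ = 0} := by
      rintro _ ⟨x, hx, rfl⟩
      have hmem : φ x ∈ K := K.sub_mem hx (K.smul_mem _ hkK)
      refine ⟨hmem, subset_closure hmem, ?_⟩
      simp only [hφdef, inner_sub_left, real_inner_smul_left, ← hcdef]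
      field_simp
      ring
    have : φ h ∈ closure (φ '' (K : Set H)) :=
      image_closure_subset_closure_image hφcont (Set.mem_image_of_mem φ hT)
    rw [hφh] at this
    exact closure_mono himg this
end
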